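/- Let X be a metric space satisfying the semi-parallelogram law (e.g. a Hilbert space or CAT(0) space): for all x,y,z there is a midpoint m of x and y with d(x,y)^2 + 4 d(m,z)^2 ≤ 2 d(x,z)^2 + 2 d(z,y)^2. Let x,y,z ∈ X with z in the ε-cone [x,y]_ε for some ε > 0, and let w be the point on the geodesic segment from x to y (extended as a geodesic ray if necessary) at distance d(x,z) from x. Then d(z,w)^2 ≤ 4(1 - e^{-2ε}) d(x,z)^2. -/

import Mathlib

/-- ε-cone approximation lemma in a metric space satisfying the semi-parallelogram law,
with convexity of the distance to a point along the geodesic through `x` and `y`. -/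
theorem stmt1 {X : Type*} [MetricSpace X]
    (hmid : ∀ a b : X, ∃ m : X, dist a m = dist a b / 2 ∧ dist m b = dist a b / 2 ∧
      ∀ c : X, dist a b ^ 2 + 4 * dist m c ^ 2 ≤ 2 * dist a c ^ 2 + 2 * dist c b ^ 2)
    (x y z : X) (ε : ℝ) (hε : 0 < ε)
    (hz : Real.exp (-ε) * dist x z + dist z y ≤ dist x y)
    (γ : ℝ → X)
    (hγ : ∀ s t : ℝ, 0 ≤ s → 0 ≤ t → dist (γ s) (γ t) = |s - t|)
    (hγ0 : γ 0 = x) (hγy : γ (dist x y) = y)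
    (hconv : ∀ p : X, ConvexOn ℝ (Set.Ici (0 : ℝ)) (fun t => dist p (γ t))) :
    dist z (γ (dist x z)) ^ 2 ≤ 4 * (1 - Real.exp (-2 * ε)) * dist x z ^ 2 := by
  set u := Real.exp (-ε) with hu
  set r := dist x z with hr
  set L := dist x y with hL
  have hu0 : 0 < u := Real.exp_pos _
  have hu1 : u < 1 := by
    rw [hu]
    exact Real.exp_lt_one_iff.mpr (by linarith)
  have hr0 : 0 ≤ r := dist_nonneg
  have hL0 : 0 ≤ L := dist_nonneg
  have hzy0 : 0 ≤ dist z y := dist_nonneg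
  have hLr : u * r ≤ L := by linarith
  have he2 : Real.exp (-2 * ε) = u ^ 2 := by
    rw [hu, sq, ← Real.exp_add]
    congr 1
    ring
  clear_value u r L
  -- distance from x along γ
  have hdx : ∀ t : ℝ, 0 ≤ t → dist x (γ t) = t := by
    intro t ht
    rw [← hγ0, hγ 0 t le_rfl ht, abs_of_nonpos (by linarith)]
    ring
  -- key recurrence from the semi-parallelogram law, with the midpoint pinned on γ
  have lemA : ∀ t : ℝ, 0 ≤ t →
      dist z (γ t) ^ 2 ≤ r ^ 2 / 2 + dist z (γ (2 * t)) ^ 2 / 2 - t ^ 2 := by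
    intro t ht
    obtain ⟨m, h1, h2, h3⟩ := hmid x (γ (2 * t))
    have hx2t : dist x (γ (2 * t)) = 2 * t := hdx _ (by linarith)
    have hxt : dist x (γ t) = t := hdx _ ht
    have htt : dist (γ t) (γ (2 * t)) = t := by
      rw [hγ t (2 * t) ht (by linarith), abs_of_nonpos (by linarith)]
      ring
    have hm : m = γ t := by
      have h4 := h3 (γ t)
      rw [hx2t, hxt] at h4
      have h5 : dist (γ t) (γ (2 * t)) ^ 2 = t ^ 2 := by rw [htt]
      have hd : dist m (γ t) = 0 := by
        nlinarith [dist_nonneg (x := m) (y := γ t), sq_nonneg (dist m (γ t))]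
      rwa [dist_eq_zero] at hd
    have h4 := h3 z
    rw [hm, hx2t] at h4
    have hc : dist (γ t) z = dist z (γ t) := dist_comm _ _
    rw [hc] at h4
    rw [← hr] at h4
    nlinarith [h4]
  -- dyadic induction
  have key : ∀ k : ℕ, ∀ t : ℝ, 0 ≤ t → L ≤ 2 ^ k * t →
      dist z (γ t) ^ 2 ≤ t ^ 2 - 2 * t * u * r + r ^ 2 + (u ^ 2 - 1) * r ^ 2 / 2 ^ k := by
    intro k
    induction k with
    | zero =>
      intro t ht hLt
      simp only [pow_zero, one_mul] at hLt ⊢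
      have h1 : dist z (γ t) ≤ t - u * r := by
        have htri : dist z (γ t) ≤ dist z (γ L) + dist (γ L) (γ t) := dist_triangle _ _ _
        have hLt' : dist y (γ t) = t - L := by
          rw [← hγy, hγ L t hL0 ht, abs_of_nonpos (by linarith)]
          ring
        rw [hγy, hLt'] at htri
        linarith
      have h2 : 0 ≤ t - u * r := by linarith
      nlinarith [dist_nonneg (x := z) (y := γ t)]
    | succ k ih =>
      intro t ht hLt
      have h2t : L ≤ 2 ^ k * (2 * t) := by
        rw [pow_succ] at hLt; linarith
      have hih := ih (2 * t) (by linarith) h2t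
      have hA := lemA t ht
      have hpow : (0 : ℝ) < 2 ^ k := by positivity
      have hdiv : (u ^ 2 - 1) * r ^ 2 / 2 ^ (k + 1) = ((u ^ 2 - 1) * r ^ 2 / 2 ^ k) / 2 := by
        rw [pow_succ]; ring
      rw [hdiv]
      linarith
  -- split on r = 0
  rcases eq_or_lt_of_le hr0 with h0 | h0
  · have hzx : dist z (γ r) = 0 := by
      rw [← h0, hγ0]
      have : z = x := by rw [hr] at h0; exact (dist_eq_zero.mp h0.symm).symm
      simp [this]
    rw [hzx, ← h0]
    norm_num
  · obtain ⟨k, hk⟩ := exists_nat_gt (L / (2 * r))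
    have hk2 : (k : ℝ) < 2 ^ k := by
      exact_mod_cast (Nat.lt_two_pow_self (n := k))
    have hk' : L ≤ 2 ^ k * (2 * r) := by
      rw [div_lt_iff₀ (by linarith)] at hk
      nlinarith
    have h2r := key k (2 * r) (by linarith) hk'
    have hpow : (0 : ℝ) < 2 ^ k := by positivity
    have hneg : (u ^ 2 - 1) * r ^ 2 / 2 ^ k ≤ 0 := by
      apply div_nonpos_of_nonpos_of_nonneg
      · apply mul_nonpos_of_nonpos_of_nonneg
        · nlinarith
        · positivity
      · positivity
    have hf2r : dist z (γ (2 * r)) ^ 2 ≤ (5 - 4 * u) * r ^ 2 := by nlinarith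
    have hA := lemA r hr0
    have hfin : dist z (γ r) ^ 2 ≤ 2 * (1 - u) * r ^ 2 := by linarith [hA, hf2r]
    have hq : 2 * (1 - u) * r ^ 2 ≤ 4 * (1 - u ^ 2) * r ^ 2 := by
      clear hmid hz hγ hconv key lemA hdx h2r hf2r hA hfin hk hk2 hk' hneg hpow he2
      nlinarith [mul_nonneg (mul_nonneg (by linarith : (0:ℝ) ≤ 1 + 2 * u) (by linarith : (0:ℝ) ≤ 1 - u)) (sq_nonneg r)]
    rw [he2]
    linarith
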